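/- Let R be a commutative ring, Γ a group, V an R[Γ]-module which is torsion-free as a ℤ-module, and Σ ⊆ Γ a subgroup of finite index. Then for every q ≥ 0 the natural restriction map on graded higher order invariants, H⁰_q(Γ,V)/H⁰_{q-1}(Γ,V) → H⁰_q(Σ,V)/H⁰_{q-1}(Σ,V), is injective. -/

import Mathlib

open MonoidAlgebra

/-- The augmentation ideal of `R[Σ]` for a subgroup `Σ ≤ Γ`, viewed inside the
group algebra `R[Γ]`: the `R`-span of the elements `σ - 1`, `σ ∈ Σ`. -/
noncomputable def augIdealS (R : Type*) {Γ : Type*} [CommRing R] [Group Γ]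
    (S : Subgroup Γ) : Submodule R (MonoidAlgebra R Γ) :=
  Submodule.span R {x | ∃ σ ∈ S, x = MonoidAlgebra.of R Γ σ - 1}

/-- The invariants of order `q` for the subgroup `Σ`:
`H⁰_q(Σ,V) = {v ∈ V : I_Σ^{q+1} v = 0}`. -/
noncomputable def ordInvS (R : Type*) {Γ : Type*} [CommRing R] [Group Γ]
    (S : Subgroup Γ) (V : Type*) [AddCommGroup V] [Module (MonoidAlgebra R Γ) V]
    [Module R V] [SMulCommClass (MonoidAlgebra R Γ) R V] (q : ℕ) :
    Submodule R V where
  carrier := {v | ∀ x ∈ (augIdealS R S) ^ (q + 1), x • v = 0}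
  add_mem' := fun {a b} ha hb x hx => by rw [smul_add, ha x hx, hb x hx, add_zero]
  zero_mem' := fun x _ => smul_zero x
  smul_mem' := fun r v hv x hx => by rw [smul_comm, hv x hx, smul_zero]

section Aux

variable {R Γ : Type*} [CommRing R] [Group Γ]

lemma augIdealS_gen_mem {S : Subgroup Γ} {γ : Γ} (hγ : γ ∈ S) :
    MonoidAlgebra.of R Γ γ - 1 ∈ augIdealS R S :=
  Submodule.subset_span ⟨γ, hγ, rfl⟩

lemma augIdealS_mono {S T : Subgroup Γ} (h : S ≤ T) :
    augIdealS R S ≤ augIdealS R T :=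
  Submodule.span_mono (fun _ ⟨σ, hσ, hx⟩ => ⟨σ, h hσ, hx⟩)

lemma augIdealS_pow_mono {S T : Subgroup Γ} (h : S ≤ T) (k : ℕ) :
    (augIdealS R S) ^ k ≤ (augIdealS R T) ^ k := by
  induction k with
  | zero => simp
  | succ k ih =>
    rw [pow_succ, pow_succ]
    exact mul_le_mul' ih (augIdealS_mono h)

lemma mul_gen_mem_aug (x : MonoidAlgebra R Γ) (γ : Γ) :
    x * (MonoidAlgebra.of R Γ γ - 1) ∈ augIdealS R (⊤ : Subgroup Γ) := by
  induction x using MonoidAlgebra.induction_on with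
  | of δ =>
    have h : MonoidAlgebra.of R Γ δ * (MonoidAlgebra.of R Γ γ - 1)
        = (MonoidAlgebra.of R Γ (δ * γ) - 1) - (MonoidAlgebra.of R Γ δ - 1) := by
      rw [map_mul]; noncomm_ring
    rw [h]
    exact sub_mem (augIdealS_gen_mem trivial) (augIdealS_gen_mem trivial)
  | add f g hf hg => rw [add_mul]; exact add_mem hf hg
  | smul r f hf => rw [smul_mul_assoc]; exact Submodule.smul_mem _ r hf

lemma mul_mem_aug (x : MonoidAlgebra R Γ) {a : MonoidAlgebra R Γ}
    (ha : a ∈ augIdealS R (⊤ : Subgroup Γ)) :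
    x * a ∈ augIdealS R (⊤ : Subgroup Γ) := by
  induction ha using Submodule.span_induction with
  | mem b hb => obtain ⟨γ, -, rfl⟩ := hb; exact mul_gen_mem_aug x γ
  | zero => rw [mul_zero]; exact zero_mem _
  | add b c _ _ hb hc => rw [mul_add]; exact add_mem hb hc
  | smul r b _ hb => rw [mul_smul_comm]; exact Submodule.smul_mem _ r hb

lemma mul_mem_aug_pow (k : ℕ) (x : MonoidAlgebra R Γ) {p : MonoidAlgebra R Γ}
    (hp : p ∈ (augIdealS R (⊤ : Subgroup Γ)) ^ (k + 1)) :
    x * p ∈ (augIdealS R (⊤ : Subgroup Γ)) ^ (k + 1) := by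
  rw [pow_succ'] at hp ⊢
  refine Submodule.mul_induction_on hp (fun c hc d hd => ?_) (fun y z hy hz => ?_)
  · rw [← mul_assoc]; exact Submodule.mul_mem_mul (mul_mem_aug x hc) hd
  · rw [mul_add]; exact add_mem hy hz

lemma binom_mem {a : MonoidAlgebra R Γ} (ha : a ∈ augIdealS R (⊤ : Subgroup Γ)) (n : ℕ) :
    (a + 1) ^ n - 1 - n • a ∈ (augIdealS R (⊤ : Subgroup Γ)) ^ 2 := by
  induction n with
  | zero => simpa using zero_mem _
  | succ n ih =>
    have hcomm : (a + 1) * ((a + 1) ^ n - 1 - n • a)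
        = ((a + 1) ^ n - 1 - n • a) * (a + 1) := by
      have h1 : Commute (a + 1) ((a + 1) ^ n) := (Commute.refl _).pow_right n
      have h2 : Commute (a + 1) a :=
        Commute.add_left (Commute.refl a) (Commute.one_left a)
      exact ((h1.sub_right (Commute.one_right _)).sub_right (h2.smul_right n)).eq
    have key : (a + 1) ^ (n + 1) - 1 - (n + 1) • a
        = (a + 1) * ((a + 1) ^ n - 1 - n • a) + n • (a * a) := by
      rw [hcomm, succ_nsmul]; noncomm_ring
    rw [key]
    refine add_mem (mul_mem_aug_pow 1 _ ih) (nsmul_mem ?_ n)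
    rw [sq]
    exact Submodule.mul_mem_mul ha ha

lemma step_gen (T : Subgroup Γ) [T.Normal] {b : MonoidAlgebra R Γ}
    (hb : b ∈ augIdealS R (⊤ : Subgroup Γ)) :
    ∃ y ∈ augIdealS R T,
      T.index • b - y ∈ (augIdealS R (⊤ : Subgroup Γ)) ^ 2 := by
  induction hb using Submodule.span_induction with
  | mem x hx =>
    obtain ⟨γ, -, rfl⟩ := hx
    refine ⟨MonoidAlgebra.of R Γ (γ ^ T.index) - 1,
      augIdealS_gen_mem (Subgroup.pow_index_mem T γ), ?_⟩
    have h : T.index • (MonoidAlgebra.of R Γ γ - 1)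
          - (MonoidAlgebra.of R Γ (γ ^ T.index) - 1)
        = -(((MonoidAlgebra.of R Γ γ - 1) + 1) ^ T.index - 1
            - T.index • (MonoidAlgebra.of R Γ γ - 1)) := by
      rw [map_pow, sub_add_cancel]; abel
    rw [h]
    exact neg_mem (binom_mem (augIdealS_gen_mem trivial) T.index)
  | zero => exact ⟨0, zero_mem _, by simpa using zero_mem _⟩
  | add x y _ _ hx hy =>
    obtain ⟨y₁, hy₁, hz₁⟩ := hx
    obtain ⟨y₂, hy₂, hz₂⟩ := hy
    refine ⟨y₁ + y₂, add_mem hy₁ hy₂, ?_⟩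
    have h : T.index • (x + y) - (y₁ + y₂)
        = (T.index • x - y₁) + (T.index • y - y₂) := by
      rw [smul_add]; abel
    rw [h]; exact add_mem hz₁ hz₂
  | smul r x _ hx =>
    obtain ⟨y, hy, hz⟩ := hx
    refine ⟨r • y, Submodule.smul_mem _ r hy, ?_⟩
    have h : T.index • (r • x) - r • y = r • (T.index • x - y) := by
      rw [smul_sub, smul_comm]
    rw [h]; exact Submodule.smul_mem _ r hz

lemma main_approx (T : Subgroup Γ) [T.Normal] (q : ℕ) :
    ∀ x ∈ (augIdealS R (⊤ : Subgroup Γ)) ^ q,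
      ∃ y ∈ (augIdealS R T) ^ q,
        (T.index ^ q) • x - y ∈ (augIdealS R (⊤ : Subgroup Γ)) ^ (q + 1) := by
  induction q with
  | zero =>
    intro x hx
    exact ⟨x, by simpa using hx, by simpa using zero_mem _⟩
  | succ q ih =>
    intro x hx
    rw [pow_succ] at hx
    refine Submodule.mul_induction_on hx (fun a ha b hb => ?_) (fun s t hs ht => ?_)
    · obtain ⟨ya, hya, hza⟩ := ih a ha
      obtain ⟨yb, hyb, hzb⟩ := step_gen T hb
      refine ⟨ya * yb, by rw [pow_succ]; exact Submodule.mul_mem_mul hya hyb, ?_⟩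
      have h1 : (T.index ^ (q + 1)) • (a * b)
          = (T.index ^ q • a) * (T.index • b) := by
        rw [smul_mul_assoc, mul_smul_comm, ← mul_smul, ← pow_succ]
      have h2 : ∀ A B : MonoidAlgebra R Γ, A * B - ya * yb
          = ya * (B - yb) + (A - ya) * B := by intro A B; noncomm_ring
      rw [h1, h2 _ _]
      refine add_mem ?_ ?_
      · have : (augIdealS R (⊤ : Subgroup Γ)) ^ q * (augIdealS R (⊤ : Subgroup Γ)) ^ 2
            ≤ (augIdealS R (⊤ : Subgroup Γ)) ^ (q + 1 + 1) :=
          le_of_eq (pow_add _ q 2).symm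
        exact this (Submodule.mul_mem_mul (augIdealS_pow_mono le_top q hya) hzb)
      · have : (augIdealS R (⊤ : Subgroup Γ)) ^ (q + 1) * (augIdealS R (⊤ : Subgroup Γ))
            ≤ (augIdealS R (⊤ : Subgroup Γ)) ^ (q + 1 + 1) :=
          le_of_eq (pow_succ _ _).symm
        exact this (Submodule.mul_mem_mul hza (nsmul_mem hb T.index))
    · obtain ⟨y₁, hy₁, hz₁⟩ := hs
      obtain ⟨y₂, hy₂, hz₂⟩ := ht
      refine ⟨y₁ + y₂, add_mem hy₁ hy₂, ?_⟩
      have h : (T.index ^ (q + 1)) • (s + t) - (y₁ + y₂)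
          = ((T.index ^ (q + 1)) • s - y₁) + ((T.index ^ (q + 1)) • t - y₂) := by
        rw [smul_add]; abel
      rw [h]; exact add_mem hz₁ hz₂


end Aux

lemma mem_ordInvS {R Γ : Type*} [CommRing R] [Group Γ] {S : Subgroup Γ}
    {V : Type*} [AddCommGroup V] [Module (MonoidAlgebra R Γ) V]
    [Module R V] [SMulCommClass (MonoidAlgebra R Γ) R V] {q : ℕ} {v : V} :
    v ∈ ordInvS R S V q ↔ ∀ x ∈ (augIdealS R S) ^ (q + 1), x • v = 0 := Iff.rfl


/-- Let `V` be an `R[Γ]`-module which is torsion-free as a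
`ℤ`-module and `Σ ≤ Γ` of finite index.  Then for every `q ≥ 0` the restriction
map on graded higher order invariants
`H⁰_q(Γ,V)/H⁰_{q-1}(Γ,V) → H⁰_q(Σ,V)/H⁰_{q-1}(Σ,V)` is injective, i.e. any
`v ∈ H⁰_q(Γ,V)` lying in `H⁰_{q-1}(Σ,V)` already lies in `H⁰_{q-1}(Γ,V)`
(with `H⁰_{-1} = 0`). -/
theorem stmt5 (R Γ : Type*) [CommRing R] [Group Γ]
    (V : Type*) [AddCommGroup V] [Module (MonoidAlgebra R Γ) V]
    [Module R V] [SMulCommClass (MonoidAlgebra R Γ) R V]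
    (htf : ∀ n : ℕ, n ≠ 0 → ∀ v : V, n • v = 0 → v = 0)
    (S : Subgroup Γ) [S.FiniteIndex] (q : ℕ) :
    ∀ v ∈ ordInvS R (⊤ : Subgroup Γ) V q,
      v ∈ (if 1 ≤ q then ordInvS R S V (q - 1) else (⊥ : Submodule R V)) →
      v ∈ (if 1 ≤ q then ordInvS R (⊤ : Subgroup Γ) V (q - 1)
           else (⊥ : Submodule R V)) := by
  intro v hv hvS
  by_cases hq : 1 ≤ q
  · rw [if_pos hq] at hvS ⊢
    obtain ⟨p, rfl⟩ : ∃ p, q = p + 1 := ⟨q - 1, by omega⟩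
    simp only [Nat.add_sub_cancel] at hvS ⊢
    set T := S.normalCore with hT
    have hTn : T.index ≠ 0 := Subgroup.FiniteIndex.index_ne_zero
    rw [mem_ordInvS]
    intro x hx
    obtain ⟨y, hy, hz⟩ := main_approx T (p + 1) x hx
    have hyv : y • v = 0 :=
      mem_ordInvS.mp hvS y (augIdealS_pow_mono S.normalCore_le (p + 1) hy)
    have hzv : (T.index ^ (p + 1) • x - y) • v = 0 := mem_ordInvS.mp hv _ hz
    have hxy : (T.index ^ (p + 1) • x) • v = 0 := by
      have e : T.index ^ (p + 1) • x = (T.index ^ (p + 1) • x - y) + y :=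
        (sub_add_cancel _ _).symm
      rw [e, add_smul, hyv, hzv, add_zero]
    have hsm : (T.index ^ (p + 1) : ℕ) • (x • v) = (T.index ^ (p + 1) • x) • v := by
      rw [← Nat.cast_smul_eq_nsmul (MonoidAlgebra R Γ) (T.index ^ (p + 1)) x,
        smul_eq_mul, mul_smul, Nat.cast_smul_eq_nsmul]
    exact htf _ (pow_ne_zero _ hTn) _ (by rw [hsm, hxy])
  · rw [if_neg hq] at hvS ⊢
    exact hvS
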